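/- Let κ > 0, μ ≥ 0 and r ≥ 0. The output covariance matrix κ·V(r) + μ·I₄ of the two-mode squeezed vacuum under the symmetric channel Φ(κ,μ)⊗Φ(κ,μ) satisfies Simon's separability criterion — i.e. the complex Hermitian matrix Λ(κV(r)+μI₄)Λ − (i/2)Δ is positive semidefinite — if and only if μ ≥ (1/2)(1 − κ·e^{−2r}). -/

import Mathlib

open Matrix ComplexOrder

/-- Covariance matrix of the two-mode squeezed vacuum with squeezing parameter `r`. -/
noncomputable def Vtms (r : ℝ) : Matrix (Fin 4) (Fin 4) ℝ :=
  (1/2 : ℝ) • !![Real.cosh (2*r), 0, Real.sinh (2*r), 0;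
                 0, Real.cosh (2*r), 0, -Real.sinh (2*r);
                 Real.sinh (2*r), 0, Real.cosh (2*r), 0;
                 0, -Real.sinh (2*r), 0, Real.cosh (2*r)]

/-- The 4×4 symplectic form, block diagonal with blocks [[0,-1],[1,0]]. -/
def Δ4 : Matrix (Fin 4) (Fin 4) ℝ :=
  !![0,-1,0,0; 1,0,0,0; 0,0,0,-1; 0,0,1,0]

/-- Partial transposition of the second mode on covariance matrices. -/
def Λ4 : Matrix (Fin 4) (Fin 4) ℝ :=
  !![1,0,0,0; 0,1,0,0; 0,0,1,0; 0,0,0,-1]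

/-- The complex Hermitian matrix `V - (i/2)Δ` built from a real 4×4 matrix `V`. -/
noncomputable def simonMatrix (V : Matrix (Fin 4) (Fin 4) ℝ) : Matrix (Fin 4) (Fin 4) ℂ :=
  V.map (fun x => (x : ℂ)) - (Complex.I / 2) • Δ4.map (fun x => (x : ℂ))

noncomputable def Nmat (a b : ℝ) : Matrix (Fin 4) (Fin 4) ℂ :=
  !![(a:ℂ), Complex.I/2, (b:ℂ), 0;
     -(Complex.I/2), (a:ℂ), 0, (b:ℂ);
     (b:ℂ), 0, (a:ℂ), Complex.I/2;
     0, (b:ℂ), -(Complex.I/2), (a:ℂ)]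

lemma real_eq (κ μ r : ℝ) :
    Λ4 * (κ • Vtms r + μ • (1 : Matrix (Fin 4) (Fin 4) ℝ)) * Λ4 =
      !![κ * Real.cosh (2*r) / 2 + μ, 0, κ * Real.sinh (2*r) / 2, 0;
         0, κ * Real.cosh (2*r) / 2 + μ, 0, κ * Real.sinh (2*r) / 2;
         κ * Real.sinh (2*r) / 2, 0, κ * Real.cosh (2*r) / 2 + μ, 0;
         0, κ * Real.sinh (2*r) / 2, 0, κ * Real.cosh (2*r) / 2 + μ] := by
  ext i j
  fin_cases i <;> fin_cases j <;>
    simp only [Matrix.mul_apply, Fin.sum_univ_four, Matrix.add_apply, Matrix.smul_apply,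
      Matrix.one_apply, Vtms, Λ4, smul_eq_mul, Matrix.cons_val', Matrix.cons_val_zero,
      Matrix.cons_val_one, Matrix.head_cons, Matrix.empty_val', Matrix.cons_val_fin_one,
      Matrix.head_fin_const, Matrix.cons_val_two, Matrix.cons_val_three, Matrix.tail_cons,
      Matrix.head_fin_const] <;>
    simp [Matrix.vecHead, Matrix.vecTail] <;> ring

lemma simon_eq (κ μ r : ℝ) :
    simonMatrix (Λ4 * (κ • Vtms r + μ • (1 : Matrix (Fin 4) (Fin 4) ℝ)) * Λ4) =
      Nmat (κ * Real.cosh (2*r) / 2 + μ) (κ * Real.sinh (2*r) / 2) := by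
  rw [real_eq]
  ext i j
  fin_cases i <;> fin_cases j <;>
    simp [simonMatrix, Nmat, Δ4, Matrix.vecHead, Matrix.vecTail] <;> ring


lemma Nmat_herm (a b : ℝ) : (Nmat a b).IsHermitian := by
  ext i j
  fin_cases i <;> fin_cases j <;>
    simp [Nmat, Matrix.conjTranspose_apply, Complex.ext_iff] <;> norm_num

lemma Nmat_quad (a b : ℝ) (x : Fin 4 → ℂ) :
    4 * (star x ⬝ᵥ Nmat a b *ᵥ x) =
      ((a+b-1/2 : ℝ) : ℂ) * ((starRingEnd ℂ) (x 0 - Complex.I * x 1 + x 2 - Complex.I * x 3) *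
        (x 0 - Complex.I * x 1 + x 2 - Complex.I * x 3)) +
      ((a+b+1/2 : ℝ) : ℂ) * ((starRingEnd ℂ) (x 0 + Complex.I * x 1 + x 2 + Complex.I * x 3) *
        (x 0 + Complex.I * x 1 + x 2 + Complex.I * x 3)) +
      ((a-b-1/2 : ℝ) : ℂ) * ((starRingEnd ℂ) (x 0 - Complex.I * x 1 - x 2 + Complex.I * x 3) *
        (x 0 - Complex.I * x 1 - x 2 + Complex.I * x 3)) +
      ((a-b+1/2 : ℝ) : ℂ) * ((starRingEnd ℂ) (x 0 + Complex.I * x 1 - x 2 - Complex.I * x 3) *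
        (x 0 + Complex.I * x 1 - x 2 - Complex.I * x 3)) := by
  simp only [dotProduct, Matrix.mulVec, Fin.sum_univ_four, Nmat, Pi.star_apply,
    Matrix.cons_val', Matrix.cons_val_zero, Matrix.cons_val_one, Matrix.head_cons,
    Matrix.cons_val_two, Matrix.cons_val_three, Matrix.tail_cons, Matrix.empty_val',
    Matrix.cons_val_fin_one, RCLike.star_def, map_add, map_sub, _root_.map_mul, map_neg,
    Complex.conj_I, Complex.conj_ofReal, map_div₀, map_ofNat, Complex.ofReal_add,
    Complex.ofReal_sub, Complex.ofReal_div, Complex.ofReal_one, Complex.ofReal_ofNat]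
  ring_nf
  simp [Complex.I_sq]
  ring

lemma conj_mul_self (z : ℂ) : (starRingEnd ℂ) z * z = (Complex.normSq z : ℂ) := by
  rw [mul_comm, Complex.mul_conj]

lemma Nmat_psd (a b : ℝ) (hb : 0 ≤ b) (h : 1/2 ≤ a - b) : (Nmat a b).PosSemidef := by
  refine .of_dotProduct_mulVec_nonneg (Nmat_herm a b) fun x => ?_
  have key := Nmat_quad a b x
  rw [conj_mul_self, conj_mul_self, conj_mul_self, conj_mul_self] at key
  set n1 := Complex.normSq (x 0 - Complex.I * x 1 + x 2 - Complex.I * x 3) with hn1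
  set n2 := Complex.normSq (x 0 + Complex.I * x 1 + x 2 + Complex.I * x 3) with hn2
  set n3 := Complex.normSq (x 0 - Complex.I * x 1 - x 2 + Complex.I * x 3) with hn3
  set n4 := Complex.normSq (x 0 + Complex.I * x 1 - x 2 - Complex.I * x 3) with hn4
  have key2 : star x ⬝ᵥ Nmat a b *ᵥ x =
      ((((a+b-1/2)*n1 + (a+b+1/2)*n2 + (a-b-1/2)*n3 + (a-b+1/2)*n4)/4 : ℝ) : ℂ) := by
    push_cast at key ⊢
    linear_combination key / 4
  rw [key2, Complex.zero_le_real]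
  have h1 : 0 ≤ n1 := Complex.normSq_nonneg _
  have h2 : 0 ≤ n2 := Complex.normSq_nonneg _
  have h3 : 0 ≤ n3 := Complex.normSq_nonneg _
  have h4 : 0 ≤ n4 := Complex.normSq_nonneg _
  have c1 : (0:ℝ) ≤ a+b-1/2 := by linarith
  have c3 : (0:ℝ) ≤ a-b-1/2 := by linarith
  have := mul_nonneg c1 h1
  have := mul_nonneg (by linarith : (0:ℝ) ≤ a+b+1/2) h2
  have := mul_nonneg c3 h3
  have := mul_nonneg (by linarith : (0:ℝ) ≤ a-b+1/2) h4
  linarith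

lemma Nmat_psd_iff (a b : ℝ) (hb : 0 ≤ b) : (Nmat a b).PosSemidef ↔ 1/2 ≤ a - b := by
  constructor
  · intro h
    have hx := h.dotProduct_mulVec_nonneg ![1, Complex.I, -1, -Complex.I]
    have key := Nmat_quad a b ![1, Complex.I, -1, -Complex.I]
    simp only [Matrix.cons_val_zero, Matrix.cons_val_one, Matrix.head_cons,
      Matrix.cons_val_two, Matrix.cons_val_three, Matrix.tail_cons] at key
    have w1 : (1 - Complex.I * Complex.I + -1 - Complex.I * -Complex.I : ℂ) = 0 := by
      rw [Complex.I_mul_I]; ring_nf; rw [Complex.I_sq]; ring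
    have w2 : (1 + Complex.I * Complex.I + -1 + Complex.I * -Complex.I : ℂ) = 0 := by
      rw [Complex.I_mul_I]; ring_nf; rw [Complex.I_sq]; ring
    have w3 : (1 - Complex.I * Complex.I - -1 + Complex.I * -Complex.I : ℂ) = 4 := by
      rw [Complex.I_mul_I]; ring_nf; rw [Complex.I_sq]; ring
    have w4 : (1 + Complex.I * Complex.I - -1 - Complex.I * -Complex.I : ℂ) = 0 := by
      rw [Complex.I_mul_I]; ring_nf; rw [Complex.I_sq]; ring
    rw [w1, w2, w3, w4] at key
    have key2 : star (![1, Complex.I, -1, -Complex.I] : Fin 4 → ℂ) ⬝ᵥ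
        Nmat a b *ᵥ ![1, Complex.I, -1, -Complex.I] = ((4*(a-b-1/2) : ℝ) : ℂ) := by
      push_cast at key ⊢
      simp only [map_zero, map_ofNat] at key
      linear_combination key / 4
    rw [key2, Complex.zero_le_real] at hx
    linarith
  · intro h
    exact Nmat_psd a b hb h

theorem simon_criterion_symmetric_channel (κ μ r : ℝ) (hκ : 0 < κ) (hμ : 0 ≤ μ)
    (hr : 0 ≤ r) :
    (simonMatrix (Λ4 * (κ • Vtms r + μ • (1 : Matrix (Fin 4) (Fin 4) ℝ)) * Λ4)).PosSemidef ↔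
      μ ≥ (1/2) * (1 - κ * Real.exp (-2*r)) := by
  rw [simon_eq, Nmat_psd_iff _ _
    (div_nonneg (mul_nonneg hκ.le (Real.sinh_nonneg_iff.2 (by linarith))) (by norm_num))]
  have he : κ * Real.cosh (2*r) - κ * Real.sinh (2*r) = κ * Real.exp (-2*r) := by
    rw [← mul_sub, Real.cosh_sub_sinh]
    ring_nf
  constructor <;> intro h' <;> [linarith; linarith]
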